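/- For every (u1,…,u5) ∈ ℝ^5 and every α ∈ ℝ: the vectors Z1,…,Z5 are linearly independent (so dim W = 5), the radical W ∩ W⊥ equals span{Z1, Z2}, and ḡ(Z5, Z5) = 1. (This verifies that the submanifold of Example 4 is a 2-lightlike submanifold.) -/

import Mathlib

noncomputable section

/-- The semi-Euclidean metric of signature `(+,+,−,−,+,+,−,−,+,+)` on `ℝ¹⁰`. -/
def gbar : LinearMap.BilinForm ℝ (Fin 10 → ℝ) :=
  LinearMap.mk₂ ℝ
    (fun x y => x 0 * y 0 + x 1 * y 1 - x 2 * y 2 - x 3 * y 3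
      + x 4 * y 4 + x 5 * y 5 - x 6 * y 6 - x 7 * y 7 + x 8 * y 8 + x 9 * y 9)
    (fun _ _ _ => by simp only [Pi.add_apply]; ring)
    (fun _ _ _ => by simp only [Pi.smul_apply, smul_eq_mul]; ring)
    (fun _ _ _ => by simp only [Pi.add_apply]; ring)
    (fun _ _ _ => by simp only [Pi.smul_apply, smul_eq_mul]; ring)

/-- The standard complex structure on `ℝ¹⁰`:
`J(x₁,…,x₁₀) = (−x₂,x₁,−x₄,x₃,−x₆,x₅,−x₈,x₇,−x₁₀,x₉)`. -/
def Jmap (x : Fin 10 → ℝ) : Fin 10 → ℝ :=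
  ![-(x 1), x 0, -(x 3), x 2, -(x 5), x 4, -(x 7), x 6, -(x 9), x 8]

/-- The parametrization of the submanifold of Example 4 (with parameter `α`). -/
def Φ (α : ℝ) (u : Fin 5 → ℝ) : Fin 10 → ℝ :=
  ![u 0 * Real.cosh α,
    Real.exp (u 1) * Real.sinh α + (u 2 + u 3 / 2) * Real.cosh α,
    u 0 * Real.sinh α,
    Real.exp (u 1) * Real.cosh α + (u 2 + u 3 / 2) * Real.sinh α,
    0,
    Real.exp (u 1),
    u 0,
    u 2 - u 3 / 2,
    -Real.cos (u 4),
    Real.sin (u 4)]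

/-- The coordinate tangent vectors `Z_i = ∂Φ/∂u_i`. -/
def Z (α : ℝ) (u : Fin 5 → ℝ) (i : Fin 5) : Fin 10 → ℝ :=
  fderiv ℝ (Φ α) u (Pi.single i 1)

section cv
variable {β : Type*} (a0 a1 a2 a3 a4 a5 a6 a7 a8 a9 : β)
lemma cva (h : (0:ℕ) < 10) : ![a0,a1,a2,a3,a4,a5,a6,a7,a8,a9] ⟨0,h⟩ = a0 := rfl
lemma cvb (h : (1:ℕ) < 10) : ![a0,a1,a2,a3,a4,a5,a6,a7,a8,a9] ⟨1,h⟩ = a1 := rfl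
lemma cvc (h : (2:ℕ) < 10) : ![a0,a1,a2,a3,a4,a5,a6,a7,a8,a9] ⟨2,h⟩ = a2 := rfl
lemma cvd (h : (3:ℕ) < 10) : ![a0,a1,a2,a3,a4,a5,a6,a7,a8,a9] ⟨3,h⟩ = a3 := rfl
lemma cve (h : (4:ℕ) < 10) : ![a0,a1,a2,a3,a4,a5,a6,a7,a8,a9] ⟨4,h⟩ = a4 := rfl
lemma cvf (h : (5:ℕ) < 10) : ![a0,a1,a2,a3,a4,a5,a6,a7,a8,a9] ⟨5,h⟩ = a5 := rfl
lemma cvg (h : (6:ℕ) < 10) : ![a0,a1,a2,a3,a4,a5,a6,a7,a8,a9] ⟨6,h⟩ = a6 := rfl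
lemma cvh (h : (7:ℕ) < 10) : ![a0,a1,a2,a3,a4,a5,a6,a7,a8,a9] ⟨7,h⟩ = a7 := rfl
lemma cvi (h : (8:ℕ) < 10) : ![a0,a1,a2,a3,a4,a5,a6,a7,a8,a9] ⟨8,h⟩ = a8 := rfl
lemma cvj (h : (9:ℕ) < 10) : ![a0,a1,a2,a3,a4,a5,a6,a7,a8,a9] ⟨9,h⟩ = a9 := rfl
lemma cwa (h : (0:ℕ) < 5) : ![a0,a1,a2,a3,a4] ⟨0,h⟩ = a0 := rfl
lemma cwb (h : (1:ℕ) < 5) : ![a0,a1,a2,a3,a4] ⟨1,h⟩ = a1 := rfl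
lemma cwc (h : (2:ℕ) < 5) : ![a0,a1,a2,a3,a4] ⟨2,h⟩ = a2 := rfl
lemma cwd (h : (3:ℕ) < 5) : ![a0,a1,a2,a3,a4] ⟨3,h⟩ = a3 := rfl
lemma cwe (h : (4:ℕ) < 5) : ![a0,a1,a2,a3,a4] ⟨4,h⟩ = a4 := rfl
lemma cna : ![a0,a1,a2,a3,a4] (0 : Fin 5) = a0 := rfl
lemma cnb : ![a0,a1,a2,a3,a4] (1 : Fin 5) = a1 := rfl
lemma cnc : ![a0,a1,a2,a3,a4] (2 : Fin 5) = a2 := rfl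
lemma cnd : ![a0,a1,a2,a3,a4] (3 : Fin 5) = a3 := rfl
lemma cne : ![a0,a1,a2,a3,a4] (4 : Fin 5) = a4 := rfl
lemma cma : ![a0,a1,a2,a3,a4,a5,a6,a7,a8,a9] (0 : Fin 10) = a0 := rfl
lemma cmb : ![a0,a1,a2,a3,a4,a5,a6,a7,a8,a9] (1 : Fin 10) = a1 := rfl
lemma cmc : ![a0,a1,a2,a3,a4,a5,a6,a7,a8,a9] (2 : Fin 10) = a2 := rfl
lemma cmd : ![a0,a1,a2,a3,a4,a5,a6,a7,a8,a9] (3 : Fin 10) = a3 := rfl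
lemma cme : ![a0,a1,a2,a3,a4,a5,a6,a7,a8,a9] (4 : Fin 10) = a4 := rfl
lemma cmf : ![a0,a1,a2,a3,a4,a5,a6,a7,a8,a9] (5 : Fin 10) = a5 := rfl
lemma cmg : ![a0,a1,a2,a3,a4,a5,a6,a7,a8,a9] (6 : Fin 10) = a6 := rfl
lemma cmh : ![a0,a1,a2,a3,a4,a5,a6,a7,a8,a9] (7 : Fin 10) = a7 := rfl
lemma cmi : ![a0,a1,a2,a3,a4,a5,a6,a7,a8,a9] (8 : Fin 10) = a8 := rfl
lemma cmj : ![a0,a1,a2,a3,a4,a5,a6,a7,a8,a9] (9 : Fin 10) = a9 := rfl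
end cv

/-- The explicit values of the tangent vectors. -/
def Vv (α : ℝ) (u : Fin 5 → ℝ) : Fin 5 → Fin 10 → ℝ :=
  ![![Real.cosh α, 0, Real.sinh α, 0, 0, 0, 1, 0, 0, 0],
    ![0, Real.exp (u 1) * Real.sinh α, 0, Real.exp (u 1) * Real.cosh α, 0, Real.exp (u 1), 0, 0, 0, 0],
    ![0, Real.cosh α, 0, Real.sinh α, 0, 0, 0, 1, 0, 0],
    ![0, Real.cosh α / 2, 0, Real.sinh α / 2, 0, 0, 0, -(1/2), 0, 0],
    ![0, 0, 0, 0, 0, 0, 0, 0, Real.sin (u 4), Real.cos (u 4)]]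

set_option linter.unreachableTactic false in
set_option linter.unusedTactic false in
lemma Z_eq (α : ℝ) (u : Fin 5 → ℝ) : Z α u = Vv α u := by
  have e0 := ((hasFDerivAt_apply (𝕜 := ℝ) (0 : Fin 5) u).mul_const (Real.cosh α)).fderiv
  have e1 : fderiv ℝ (fun v : Fin 5 → ℝ => Real.exp (v 1) * Real.sinh α + (v 2 + v 3 * 2⁻¹) * Real.cosh α) u = _ :=
    (((hasFDerivAt_apply (𝕜 := ℝ) (1 : Fin 5) u).exp.mul_const (Real.sinh α)).add
      (((hasFDerivAt_apply (𝕜 := ℝ) (2 : Fin 5) u).add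
        ((hasFDerivAt_apply (𝕜 := ℝ) (3 : Fin 5) u).mul_const ((2:ℝ)⁻¹))).mul_const (Real.cosh α))).fderiv
  have e2 := ((hasFDerivAt_apply (𝕜 := ℝ) (0 : Fin 5) u).mul_const (Real.sinh α)).fderiv
  have e3 : fderiv ℝ (fun v : Fin 5 → ℝ => Real.exp (v 1) * Real.cosh α + (v 2 + v 3 * 2⁻¹) * Real.sinh α) u = _ :=
    (((hasFDerivAt_apply (𝕜 := ℝ) (1 : Fin 5) u).exp.mul_const (Real.cosh α)).add
      (((hasFDerivAt_apply (𝕜 := ℝ) (2 : Fin 5) u).add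
        ((hasFDerivAt_apply (𝕜 := ℝ) (3 : Fin 5) u).mul_const ((2:ℝ)⁻¹))).mul_const (Real.sinh α))).fderiv
  have e4 := (hasFDerivAt_const (𝕜 := ℝ) (0:ℝ) u).fderiv
  have e5 := (hasFDerivAt_apply (𝕜 := ℝ) (1 : Fin 5) u).exp.fderiv
  have e6 := (hasFDerivAt_apply (𝕜 := ℝ) (0 : Fin 5) u).fderiv
  have e7 : fderiv ℝ (fun v : Fin 5 → ℝ => v 2 - v 3 * 2⁻¹) u = _ := ((hasFDerivAt_apply (𝕜 := ℝ) (2 : Fin 5) u).sub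
      ((hasFDerivAt_apply (𝕜 := ℝ) (3 : Fin 5) u).mul_const ((2:ℝ)⁻¹))).fderiv
  have e8 : fderiv ℝ (fun v : Fin 5 → ℝ => -Real.cos (v 4)) u = _ :=
    (hasFDerivAt_apply (𝕜 := ℝ) (4 : Fin 5) u).cos.neg.fderiv
  have e9 := (hasFDerivAt_apply (𝕜 := ℝ) (4 : Fin 5) u).sin.fderiv
  have hdiff : ∀ j : Fin 10, DifferentiableAt ℝ (fun v => Φ α v j) u := by
    intro j
    fin_cases j <;>
      simp only [Φ, cva, cvb, cvc, cvd, cve, cvf, cvg, cvh, cvi, cvj, div_eq_mul_inv] <;>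
      fun_prop
  funext i j
  have base : Z α u i j = fderiv ℝ (fun v => Φ α v j) u (Pi.single i 1) := by
    show (fderiv ℝ (Φ α) u) (Pi.single i 1) j = _
    rw [show (Φ α) = (fun v j => Φ α v j) from rfl, fderiv_pi hdiff]
    rfl
  rw [base]
  fin_cases i <;> fin_cases j <;>
    simp only [Φ, Vv, cva, cvb, cvc, cvd, cve, cvf, cvg, cvh, cvi, cvj, cwa, cwb, cwc, cwd, cwe,
      div_eq_mul_inv] <;>
    simp only [e0, e1, e2, e3, e4, e5, e6, e7, e8, e9] <;>
    simp [Pi.single_apply] <;>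
    first | ring | norm_num

set_option maxHeartbeats 2000000 in
lemma gramv (α : ℝ) (u : Fin 5 → ℝ) (i j : Fin 5) :
    gbar (Vv α u i) (Vv α u j) =
      ![![0,0,0,0,0],![0,0,0,0,0],![0,0,0,1,0],![0,0,1,0,0],![0,0,0,0,1]] i j := by
  have hc := Real.cosh_sq_sub_sinh_sq α
  have hs := Real.sin_sq_add_cos_sq (u 4)
  fin_cases i <;> fin_cases j <;>
    simp only [gbar, LinearMap.mk₂_apply, Vv,
      cva, cvb, cvc, cvd, cve, cvf, cvg, cvh, cvi, cvj,
      cwa, cwb, cwc, cwd, cwe, cna, cnb, cnc, cnd, cne,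
      cma, cmb, cmc, cmd, cme, cmf, cmg, cmh, cmi, cmj] <;>
    nlinarith [hc, hs]

theorem example4_is_two_lightlike (α : ℝ) (u : Fin 5 → ℝ) :
    LinearIndependent ℝ (Z α u) ∧
    Module.finrank ℝ (Submodule.span ℝ (Set.range (Z α u))) = 5 ∧
    Submodule.span ℝ (Set.range (Z α u)) ⊓
        LinearMap.BilinForm.orthogonal gbar (Submodule.span ℝ (Set.range (Z α u)))
      = Submodule.span ℝ {Z α u 0, Z α u 1} ∧
    gbar (Z α u 4) (Z α u 4) = 1 := by
  rw [Z_eq]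
  have G := gramv α u
  have hexp : Real.exp (u 1) ≠ 0 := Real.exp_ne_zero _
  have hcosh : (0:ℝ) < Real.cosh α := Real.cosh_pos α
  have hs := Real.sin_sq_add_cos_sq (u 4)
  have hli : LinearIndependent ℝ (Vv α u) := by
    rw [Fintype.linearIndependent_iff]
    intro g hg
    have h6 := congrFun hg 6
    have h5 := congrFun hg 5
    have h1 := congrFun hg 1
    have h7 := congrFun hg 7
    have h8 := congrFun hg 8
    have h9 := congrFun hg 9
    simp only [Fin.sum_univ_five, Vv, Pi.add_apply, Pi.smul_apply, smul_eq_mul,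
      cna, cnb, cnc, cnd, cne, cma, cmb, cmc, cmd, cme, cmf, cmg, cmh, cmi, cmj,
      Pi.zero_apply, mul_zero, mul_one, add_zero, zero_add] at h6 h5 h1 h7 h8 h9
    have hg0 : g 0 = 0 := by linarith
    have hg1 : g 1 = 0 := by
      rcases mul_eq_zero.1 h5 with h | h
      · exact h
      · exact absurd h hexp
    rw [hg1, zero_mul, zero_add] at h1
    have e2 : (g 2 + g 3 * -(1/2)) * Real.cosh α = 0 := by rw [h7, zero_mul]
    have hg3c : g 3 * Real.cosh α = 0 := by linear_combination h1 - e2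
    have hg3 : g 3 = 0 := by
      rcases mul_eq_zero.1 hg3c with h | h
      · exact h
      · linarith
    have hg2 : g 2 = 0 := by rw [hg3] at h7; linarith
    have hg4 : g 4 = 0 := by
      linear_combination Real.sin (u 4) * h8 + Real.cos (u 4) * h9 - g 4 * hs
    intro i
    fin_cases i <;> assumption
  refine ⟨hli, (finrank_span_eq_card hli).trans (by simp), ?_, G 4 4⟩
  apply le_antisymm
  · rintro x hx
    rw [Submodule.mem_inf] at hx
    obtain ⟨hx1, hx2⟩ := hx
    rw [Submodule.mem_span_range_iff_exists_fun] at hx1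
    obtain ⟨c, rfl⟩ := hx1
    rw [LinearMap.BilinForm.mem_orthogonal_iff] at hx2
    have H : ∀ k : Fin 5, gbar (Vv α u k) (∑ i, c i • Vv α u i) = 0 := fun k =>
      hx2 (Vv α u k) (Submodule.subset_span ⟨k, rfl⟩)
    have g20 : gbar (Vv α u 2) (Vv α u 0) = 0 := G 2 0
    have g21 : gbar (Vv α u 2) (Vv α u 1) = 0 := G 2 1
    have g22 : gbar (Vv α u 2) (Vv α u 2) = 0 := G 2 2
    have g23 : gbar (Vv α u 2) (Vv α u 3) = 1 := G 2 3
    have g24 : gbar (Vv α u 2) (Vv α u 4) = 0 := G 2 4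
    have g30 : gbar (Vv α u 3) (Vv α u 0) = 0 := G 3 0
    have g31 : gbar (Vv α u 3) (Vv α u 1) = 0 := G 3 1
    have g32 : gbar (Vv α u 3) (Vv α u 2) = 1 := G 3 2
    have g33 : gbar (Vv α u 3) (Vv α u 3) = 0 := G 3 3
    have g34 : gbar (Vv α u 3) (Vv α u 4) = 0 := G 3 4
    have g40 : gbar (Vv α u 4) (Vv α u 0) = 0 := G 4 0
    have g41 : gbar (Vv α u 4) (Vv α u 1) = 0 := G 4 1
    have g42 : gbar (Vv α u 4) (Vv α u 2) = 0 := G 4 2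
    have g43 : gbar (Vv α u 4) (Vv α u 3) = 0 := G 4 3
    have g44 : gbar (Vv α u 4) (Vv α u 4) = 1 := G 4 4
    have H2 := H 2
    have H3 := H 3
    have H4 := H 4
    simp only [Fin.sum_univ_five, map_add, map_smul, smul_eq_mul,
      g20, g21, g22, g23, g24, g30, g31, g32, g33, g34, g40, g41, g42, g43, g44,
      mul_zero, mul_one, add_zero, zero_add] at H2 H3 H4
    rw [Submodule.mem_span_pair]
    refine ⟨c 0, c 1, ?_⟩
    rw [Fin.sum_univ_five, H2, H3, H4]
    simp
  · rw [Submodule.span_le]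
    have key : ∀ k : Fin 5, (∀ i : Fin 5, gbar (Vv α u i) (Vv α u k) = 0) →
        Vv α u k ∈ Submodule.span ℝ (Set.range (Vv α u)) ⊓
          LinearMap.BilinForm.orthogonal gbar (Submodule.span ℝ (Set.range (Vv α u))) := by
      intro k hk
      rw [Submodule.mem_inf]
      refine ⟨Submodule.subset_span ⟨k, rfl⟩, ?_⟩
      rw [LinearMap.BilinForm.mem_orthogonal_iff]
      intro n hn
      induction hn using Submodule.span_induction with
      | mem x hx =>
        obtain ⟨i, rfl⟩ := hx
        exact hk i
      | zero => simp [LinearMap.BilinForm.IsOrtho]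
      | add x y _ _ hx hy =>
        simp only [LinearMap.BilinForm.IsOrtho, map_add, LinearMap.add_apply] at *
        rw [hx, hy, add_zero]
      | smul a x _ hx =>
        simp only [LinearMap.BilinForm.IsOrtho, map_smul, LinearMap.smul_apply,
          smul_eq_mul] at *
        rw [hx, mul_zero]
    rintro x (rfl | rfl)
    · exact key 0 (fun i => by fin_cases i <;> exact G _ 0)
    · exact key 1 (fun i => by fin_cases i <;> exact G _ 1)
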